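/- The two-variable generating function for the rank of semi-strict unimodal sequences satisfies ∑_{m,n} dm(m,n) ζ^m q^n = ∑_{n≥0} ((-ζ^{-1}q; q)_n / (ζq; q)_n) q^{n+1}. -/

import Mathlib

/-- A semi-strict unimodal sequence, represented as
(parts before the peak, the peak, parts after the peak). -/
def IsSemiStrictUnimodal (n : ℕ) (x : List ℕ × ℕ × List ℕ) : Prop :=
  x.1.Pairwise (· < ·) ∧ x.2.2.Pairwise (· ≥ ·) ∧
  (∀ y ∈ x.1, 0 < y ∧ y < x.2.1) ∧ (∀ y ∈ x.2.2, 0 < y ∧ y < x.2.1) ∧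
  0 < x.2.1 ∧ x.1.sum + x.2.1 + x.2.2.sum = n

/-- the rank: number of parts after the peak minus number of parts before the peak -/
def unimodalRank (x : List ℕ × ℕ × List ℕ) : ℤ := (x.2.2.length : ℤ) - x.1.length

/-- `dm(m,n)`: the number of semi-strict unimodal sequences of size `n` and rank `m` -/
noncomputable def dmCount (m : ℤ) (n : ℕ) : ℕ :=
  Set.ncard {x : List ℕ × ℕ × List ℕ | IsSemiStrictUnimodal n x ∧ unimodalRank x = m}

open LaurentPolynomial PowerSeries Finset

namespace SSU

local notation "R" => LaurentPolynomial ℚ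


lemma list_finite (N : ℕ) : {l : List ℕ | l.length ≤ N ∧ ∀ y ∈ l, y ≤ N}.Finite := by
  have h : {l : List (Fin (N+1)) | l.length ≤ N}.Finite := List.finite_length_le _ _
  refine (h.image (List.map Fin.val)).subset ?_
  rintro l ⟨hlen, hmem⟩
  refine ⟨l.map (fun y => (⟨y % (N+1), Nat.mod_lt _ N.succ_pos⟩ : Fin (N+1))), by simpa using hlen, ?_⟩
  simp only [List.map_map]
  conv_rhs => rw [← List.map_id l]
  refine List.map_congr_left fun a ha => ?_
  simp [Nat.mod_eq_of_lt (Nat.lt_succ_of_le (hmem a ha))]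

lemma isSSU_finite (N : ℕ) : {x : List ℕ × ℕ × List ℕ | IsSemiStrictUnimodal N x}.Finite := by
  refine (((list_finite N).prod ((Set.finite_Iic N).prod (list_finite N)))).subset ?_
  rintro ⟨l1, c, l2⟩ ⟨hs1, hs2, hp1, hp2, hc, hsum⟩
  dsimp only at hs1 hs2 hp1 hp2 hc hsum
  have h1 : l1.sum ≤ N := by omega
  have h2 : l2.sum ≤ N := by omega
  have e1 : ∀ y ∈ l1, y ≤ N := fun y hy =>
    le_trans (List.single_le_sum (fun x _ => Nat.zero_le x) y hy) h1
  have e2 : ∀ y ∈ l2, y ≤ N := fun y hy =>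
    le_trans (List.single_le_sum (fun x _ => Nat.zero_le x) y hy) h2
  exact ⟨⟨List.length_le_sum_of_one_le _ (fun i hi => (hp1 i hi).1) |>.trans h1, e1⟩,
    by simp only [Set.mem_Iic]; omega,
    ⟨List.length_le_sum_of_one_le _ (fun i hi => (hp2 i hi).1) |>.trans h2, e2⟩⟩

noncomputable def UF (N : ℕ) : Finset (List ℕ × ℕ × List ℕ) := (isSSU_finite N).toFinset

lemma mem_UF {N : ℕ} {x : List ℕ × ℕ × List ℕ} : x ∈ UF N ↔ IsSemiStrictUnimodal N x := by
  simp [UF, Set.Finite.mem_toFinset]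

lemma dmCount_eq (m : ℤ) (N : ℕ) :
    dmCount m N = ((UF N).filter fun x => unimodalRank x = m).card := by
  rw [dmCount, ← Set.ncard_coe_finset]
  congr 1
  ext x
  simp [mem_UF]

lemma lhs_eq (N : ℕ) :
    (∑ᶠ m : ℤ, (dmCount m N : ℚ) • (T m : LaurentPolynomial ℚ)) =
      ∑ x ∈ UF N, T (unimodalRank x) := by
  rw [finsum_eq_finset_sum_of_support_subset _
    (s := (UF N).image unimodalRank) ?_]
  · rw [← Finset.sum_fiberwise_of_maps_to (fun x hx => Finset.mem_image_of_mem unimodalRank hx)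
      (fun x => (T (unimodalRank x) : LaurentPolynomial ℚ))]
    refine Finset.sum_congr rfl fun m _ => ?_
    rw [dmCount_eq, Nat.cast_smul_eq_nsmul]
    rw [Finset.sum_congr rfl (fun x hx => by
      rw [(Finset.mem_filter.mp hx).2]), Finset.sum_const]
  · intro m hm
    have : dmCount m N ≠ 0 := by
      intro h
      simp only [Function.mem_support] at hm
      rw [h] at hm; simp at hm
    rw [dmCount_eq] at this
    obtain ⟨x, hx⟩ := Finset.card_ne_zero.mp this |>.exists_mem
    simp only [Finset.mem_filter] at hx
    simp only [Finset.coe_image, Set.mem_image, Finset.mem_coe]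
    exact ⟨x, hx.1, hx.2⟩

lemma lhs_fiber (N : ℕ) : ∑ x ∈ UF N, (T (unimodalRank x) : LaurentPolynomial ℚ) =
    ∑ n ∈ range (N+1), ∑ x ∈ (UF N).filter (fun x => x.2.1 = n + 1),
      T (unimodalRank x) := by
  rw [← Finset.sum_fiberwise_of_maps_to (g := fun x => x.2.1 - 1) (t := range (N+1))
    (fun x hx => ?_) (fun x => (T (unimodalRank x) : LaurentPolynomial ℚ))]
  · refine Finset.sum_congr rfl fun n _ => Finset.sum_congr ?_ fun _ _ => rfl
    apply Finset.filter_congr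
    intro x hx
    have h := mem_UF.mp hx
    have : 0 < x.2.1 := h.2.2.2.2.1
    omega
  · have h := mem_UF.mp hx
    have h1 : 0 < x.2.1 := h.2.2.2.2.1
    have h2 : x.2.1 ≤ N := by have := h.2.2.2.2.2; omega
    simp only [Finset.mem_range]
    omega




noncomputable def geom (d : ℕ) : PowerSeries R :=
  PowerSeries.mk fun k => if d ∣ k then T ((k / d : ℕ) : ℤ) else 0

lemma T_sum {ι : Type*} (s : Finset ι) (f : ι → ℤ) :
    (T (∑ i ∈ s, f i) : R) = ∏ i ∈ s, T (f i) := by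
  classical
  induction s using Finset.induction with
  | empty => simp [T_zero]
  | insert _ _ h ih => rw [Finset.sum_insert h, Finset.prod_insert h, T_add, ih]

lemma geom_spec (d : ℕ) (hd : 0 < d) :
    (1 - (PowerSeries.C : R →+* PowerSeries R) (T 1) * X ^ d) * geom d = 1 := by
  ext k
  rw [sub_mul, one_mul, map_sub, mul_assoc, PowerSeries.coeff_C_mul,
    PowerSeries.coeff_X_pow_mul', PowerSeries.coeff_one]
  simp only [geom, PowerSeries.coeff_mk]
  rcases eq_or_ne k 0 with rfl | hk
  · rw [if_pos (dvd_zero d), if_neg (by omega), if_pos rfl]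
    simp [T_zero]
  · rw [if_neg hk]
    by_cases hdk : d ∣ k
    · have hdle : d ≤ k := Nat.le_of_dvd (Nat.pos_of_ne_zero hk) hdk
      have h2 : d ∣ (k - d) := Nat.dvd_sub hdk dvd_rfl
      rw [if_pos hdk, if_pos hdle, if_pos h2]
      have h4 : 1 ≤ k / d := (Nat.one_le_div_iff hd).mpr hdle
      have h3 : (k - d) / d = k / d - 1 := by
        obtain ⟨c, rfl⟩ := hdk
        rw [Nat.mul_div_cancel_left _ hd, show d * c - d = d * (c - 1) by
          rw [Nat.mul_sub, mul_one], Nat.mul_div_cancel_left _ hd]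
      rw [h3, ← T_add]
      rw [show (1 : ℤ) + ((k / d - 1 : ℕ) : ℤ) = ((k / d : ℕ) : ℤ) by
        push_cast [h4]; ring]
      ring
    · rw [if_neg hdk]
      by_cases hdle : d ≤ k
      · rw [if_pos hdle, if_neg (fun h2 => hdk (by
          have : k = (k - d) + d := by omega
          rw [this]; exact Nat.dvd_add h2 dvd_rfl))]
        simp
      · rw [if_neg hdle]; simp

lemma prod_one_sub_mul_geom (n : ℕ) :
    (∏ j ∈ range n, (1 - (PowerSeries.C : R →+* PowerSeries R) (T 1) * X ^ (j + 1))) *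
      (∏ j ∈ range n, geom (j + 1)) = 1 := by
  rw [← Finset.prod_mul_distrib]
  exact Finset.prod_eq_one fun j _ => geom_spec (j + 1) j.succ_pos

lemma invOfUnit_prod (n : ℕ) :
    PowerSeries.invOfUnit (∏ j ∈ range n, (1 - (PowerSeries.C : R →+* PowerSeries R) (T 1) * X ^ (j + 1))) 1
      = ∏ j ∈ range n, geom (j + 1) := by
  set B := ∏ j ∈ range n, (1 - (PowerSeries.C : R →+* PowerSeries R) (T 1) * X ^ (j + 1)) with hB
  have hc : constantCoeff B = 1 := by
    rw [hB, map_prod]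
    refine Finset.prod_eq_one fun j _ => ?_
    simp
  have h1 : B * PowerSeries.invOfUnit B 1 = 1 :=
    PowerSeries.mul_invOfUnit B 1 (by simp [hc])
  calc PowerSeries.invOfUnit B 1
      = ((∏ j ∈ range n, geom (j + 1)) * B) * PowerSeries.invOfUnit B 1 := by
        rw [mul_comm _ B, prod_one_sub_mul_geom, one_mul]
    _ = (∏ j ∈ range n, geom (j + 1)) * (B * PowerSeries.invOfUnit B 1) := by rw [mul_assoc]
    _ = ∏ j ∈ range n, geom (j + 1) := by rw [h1, mul_one]

lemma coeff_prod_geom (n l : ℕ) :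
    PowerSeries.coeff l (∏ j ∈ range n, geom (j + 1)) =
      ∑ d ∈ finsuppAntidiag (range n) l,
        if ∀ j ∈ range n, (j + 1) ∣ d j then
          T (∑ j ∈ range n, ((d j / (j + 1) : ℕ) : ℤ)) else 0 := by
  rw [PowerSeries.coeff_prod]
  refine Finset.sum_congr rfl fun d _ => ?_
  have : ∀ i ∈ range n, PowerSeries.coeff (d i) (geom (i + 1)) =
      if (i + 1) ∣ d i then (T ((d i / (i + 1) : ℕ) : ℤ) : R) else 0 := by
    intro i _; simp [geom]
  rw [Finset.prod_congr rfl this, Finset.prod_ite_zero]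
  split
  · rw [T_sum]
  · rfl

lemma A_eq (n : ℕ) :
    (∏ j ∈ range n, (1 + (PowerSeries.C : R →+* PowerSeries R) (T (-1)) * X ^ (j + 1))) =
      ∑ t ∈ (range n).powerset,
        (PowerSeries.C : R →+* PowerSeries R) (T (-(t.card : ℤ))) * X ^ (∑ j ∈ t, (j + 1)) := by
  rw [Finset.prod_congr rfl (fun j _ => add_comm 1 ((PowerSeries.C : R →+* PowerSeries R) (T (-1)) * X ^ (j + 1))),
    Finset.prod_add]
  refine Finset.sum_congr rfl fun t _ => ?_
  rw [Finset.prod_const_one, mul_one, Finset.prod_mul_distrib, Finset.prod_pow_eq_pow_sum,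
    Finset.prod_const, ← map_pow, T_pow]
  norm_num



lemma W1 {s : Finset ℕ} {m : Multiset ℕ} (h : ∀ a ∈ m, a ∈ s) :
    ∑ a ∈ s, m.count a * a = m.sum := by
  have h1 : m.toFinset ⊆ s := fun a ha => h a (Multiset.mem_toFinset.mp ha)
  rw [← Finset.sum_subset h1 (fun a _ ha => by
    rw [Multiset.count_eq_zero_of_notMem (fun hm => ha (Multiset.mem_toFinset.mpr hm))]
    ring)]
  rw [Finset.sum_multiset_count m]
  exact Finset.sum_congr rfl fun a _ => by rw [smul_eq_mul]

lemma W3 {s : Finset ℕ} {m : Multiset ℕ} (h : ∀ a ∈ m, a ∈ s) :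
    ∑ a ∈ s, Multiset.replicate (m.count a) a = m := by
  have h1 : m.toFinset ⊆ s := fun a ha => h a (Multiset.mem_toFinset.mp ha)
  rw [← Finset.sum_subset h1 (fun a _ ha => by
    rw [Multiset.count_eq_zero_of_notMem (fun hm => ha (Multiset.mem_toFinset.mpr hm)),
      Multiset.replicate_zero])]
  rw [Finset.sum_congr rfl (fun a _ => (Multiset.nsmul_singleton a (m.count a)).symm)]
  exact Multiset.toFinset_sum_count_nsmul_eq m

lemma list_count_sum (n : ℕ) (l : List ℕ) (hl : ∀ y ∈ l, 1 ≤ y ∧ y ≤ n) :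
    ∑ j ∈ range n, (j + 1) * l.count (j + 1) = l.sum := by
  have hmem : ∀ a ∈ (l : Multiset ℕ), a ∈ (range n).image (· + 1) := by
    intro a ha
    rw [Multiset.mem_coe] at ha
    refine Finset.mem_image.mpr ⟨a - 1, Finset.mem_range.mpr ?_, ?_⟩ <;>
      have := hl a ha <;> omega
  have := W1 hmem
  rw [Finset.sum_image (fun a _ b _ h => by omega)] at this
  rw [Multiset.sum_coe] at this
  rw [← this]
  refine Finset.sum_congr rfl fun j _ => ?_
  rw [Multiset.coe_count, mul_comm]

lemma list_count_len (n : ℕ) (l : List ℕ) (hl : ∀ y ∈ l, 1 ≤ y ∧ y ≤ n) :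
    ∑ j ∈ range n, l.count (j + 1) = l.length := by
  have hmem : ∀ a ∈ (l : Multiset ℕ), a ∈ (range n).image (· + 1) := by
    intro a ha
    rw [Multiset.mem_coe] at ha
    refine Finset.mem_image.mpr ⟨a - 1, Finset.mem_range.mpr ?_, ?_⟩ <;>
      have := hl a ha <;> omega
  have := Multiset.sum_count_eq_card hmem
  rw [Finset.sum_image (fun a _ b _ h => by omega), Multiset.coe_card] at this
  rw [← this]
  refine Finset.sum_congr rfl fun j _ => (Multiset.coe_count _ _).symm
  
lemma list_repl_sum (n : ℕ) (l : List ℕ) (hl : ∀ y ∈ l, 1 ≤ y ∧ y ≤ n) :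
    ∑ j ∈ range n, Multiset.replicate (l.count (j + 1)) (j + 1) = (l : Multiset ℕ) := by
  have hmem : ∀ a ∈ (l : Multiset ℕ), a ∈ (range n).image (· + 1) := by
    intro a ha
    rw [Multiset.mem_coe] at ha
    refine Finset.mem_image.mpr ⟨a - 1, Finset.mem_range.mpr ?_, ?_⟩ <;>
      have := hl a ha <;> omega
  have := W3 hmem
  rw [Finset.sum_image (fun a _ b _ h => by omega)] at this
  rw [← this]
  refine Finset.sum_congr rfl fun j _ => by rw [Multiset.coe_count]

noncomputable def kappa (n M : ℕ) (t : Finset ℕ) : Finset (ℕ →₀ ℕ) :=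
  if (∑ j ∈ t, (j + 1)) ≤ M then
    (finsuppAntidiag (range n) (M - ∑ j ∈ t, (j + 1))).filter
      (fun d => ∀ j ∈ range n, (j + 1) ∣ d j)
  else ∅


lemma coeff_AG (n M : ℕ) :
    PowerSeries.coeff M
      ((∏ j ∈ range n, (1 + (PowerSeries.C : R →+* PowerSeries R) (T (-1)) * X ^ (j + 1))) *
        ∏ j ∈ range n, geom (j + 1)) =
    ∑ p ∈ ((range n).powerset).sigma (kappa n M),
      T ((∑ j ∈ range n, ((p.2 j / (j + 1) : ℕ) : ℤ)) - p.1.card) := by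
  rw [A_eq, Finset.sum_mul, map_sum, Finset.sum_sigma]
  refine Finset.sum_congr rfl fun t _ => ?_
  rw [mul_assoc, PowerSeries.coeff_C_mul, PowerSeries.coeff_X_pow_mul', kappa]
  split_ifs with h
  · rw [coeff_prod_geom, Finset.mul_sum, Finset.sum_filter]
    refine Finset.sum_congr rfl fun d _ => ?_
    rw [mul_ite, mul_zero, ← T_add]
    exact if_congr Iff.rfl (by rw [sub_eq_neg_add]) rfl
  · simp



noncomputable def enc (n : ℕ) (x : List ℕ × ℕ × List ℕ) : Σ _ : Finset ℕ, (ℕ →₀ ℕ) :=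
  ⟨(x.1.map (· - 1)).toFinset,
    Finsupp.onFinset (range n) (fun j => if j ∈ range n then (j + 1) * x.2.2.count (j + 1) else 0)
      (fun j h => by by_contra hj; simp [hj] at h)⟩

noncomputable def dec (n : ℕ) (p : Σ _ : Finset ℕ, (ℕ →₀ ℕ)) : List ℕ × ℕ × List ℕ :=
  ((p.1.sort (· ≤ ·)).map (· + 1), n + 1,
    Multiset.sort (∑ j ∈ range n, Multiset.replicate (p.2 j / (j + 1)) (j + 1)) (· ≥ ·))

instance : IsAntisymm ℕ (· ≥ ·) := ⟨fun _ _ h1 h2 => le_antisymm h2 h1⟩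

lemma sort_map_sum (t : Finset ℕ) (f : ℕ → ℕ) :
    ((t.sort (· ≤ ·)).map f).sum = ∑ j ∈ t, f j := by
  have h : (↑((t.sort (· ≤ ·)).map f) : Multiset ℕ) = t.val.map f := by
    rw [← Finset.sort_eq t (· ≤ ·), Multiset.map_coe]
  calc ((t.sort (· ≤ ·)).map f).sum
      = ((↑((t.sort (· ≤ ·)).map f) : Multiset ℕ)).sum := by rw [Multiset.sum_coe]
    _ = (t.val.map f).sum := by rw [h]
    _ = ∑ j ∈ t, f j := rfl

lemma msum_finsum {ι : Type*} (s : Finset ι) (f : ι → Multiset ℕ) :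
    (∑ i ∈ s, f i).sum = ∑ i ∈ s, (f i).sum := by
  classical
  induction s using Finset.induction with
  | empty => simp
  | insert _ _ h ih => rw [Finset.sum_insert h, Finset.sum_insert h, Multiset.sum_add, ih]

lemma mem_kappa {n M : ℕ} {t : Finset ℕ} {d : ℕ →₀ ℕ} (h : d ∈ kappa n M t) :
    (∑ j ∈ t, (j + 1)) ≤ M ∧ (∑ j ∈ range n, d j) = M - (∑ j ∈ t, (j + 1)) ∧
      (∀ j, d j ≠ 0 → j ∈ range n) ∧ ∀ j ∈ range n, (j + 1) ∣ d j := by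
  rw [kappa] at h
  by_cases hSt : (∑ j ∈ t, (j + 1)) ≤ M
  · rw [if_pos hSt, Finset.mem_filter, Finset.mem_finsuppAntidiag] at h
    exact ⟨hSt, h.1.1, fun j hj => h.1.2 (Finsupp.mem_support_iff.mpr hj), h.2⟩
  · rw [if_neg hSt] at h; exact absurd h (Finset.notMem_empty _)

lemma nodup_pred {l : List ℕ} (h : l.Nodup) (hp : ∀ y ∈ l, 1 ≤ y) :
    (l.map (· - 1)).Nodup := by
  exact List.Nodup.map_on
    (fun x hx y hy hxy => by have := hp x hx; have := hp y hy; omega) h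

lemma enc_fst_sum {l : List ℕ} (h1 : l.Nodup) (hp : ∀ y ∈ l, 1 ≤ y) :
    ∑ j ∈ (l.map (· - 1)).toFinset, (j + 1) = l.sum := by
  have hnd : (l.map (· - 1)).Nodup := nodup_pred h1 hp
  rw [List.sum_toFinset _ hnd, List.map_map]
  rw [List.map_congr_left (g := id) (fun a ha => by have := hp a ha; simp; omega), List.map_id]

lemma enc_fst_card {l : List ℕ} (h1 : l.Nodup) (hp : ∀ y ∈ l, 1 ≤ y) :
    (l.map (· - 1)).toFinset.card = l.length := by
  rw [List.toFinset_card_of_nodup (nodup_pred h1 hp), List.length_map]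

lemma fiber_eq (N n : ℕ) (hn : n + 1 ≤ N) :
    ∑ x ∈ (UF N).filter (fun x => x.2.1 = n + 1), (T (unimodalRank x) : R) =
      ∑ p ∈ ((range n).powerset).sigma (kappa n (N - (n + 1))),
        T ((∑ j ∈ range n, ((p.2 j / (j + 1) : ℕ) : ℤ)) - p.1.card) := by
  have hfact : ∀ x ∈ (UF N).filter (fun x => x.2.1 = n + 1),
      x.1.Pairwise (· < ·) ∧ x.2.2.Pairwise (· ≥ ·) ∧ (∀ y ∈ x.1, 1 ≤ y ∧ y ≤ n) ∧
      (∀ y ∈ x.2.2, 1 ≤ y ∧ y ≤ n) ∧ x.1.sum + (n + 1) + x.2.2.sum = N := by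
    intro x hx
    obtain ⟨hu, hpk⟩ := Finset.mem_filter.mp hx
    obtain ⟨a, b, c, d, e, f⟩ := mem_UF.mp hu
    rw [hpk] at c d f
    exact ⟨a, b, fun y hy => by have := c y hy; omega,
      fun y hy => by have := d y hy; omega, f⟩
  refine Finset.sum_bij' (fun x _ => enc n x) (fun p _ => dec n p) ?_ ?_ ?_ ?_ ?_
  -- hi : enc maps into the sigma set
  · intro x hx
    obtain ⟨hs1, hs2, hp1, hp2, hsum⟩ := hfact x hx
    rw [Finset.mem_sigma]
    constructor
    · rw [Finset.mem_powerset]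
      intro j hj
      obtain ⟨y, hy, rfl⟩ := List.mem_map.mp (List.mem_toFinset.mp hj)
      have := hp1 y hy
      exact Finset.mem_range.mpr (by omega)
    · have hs : ∑ j ∈ (enc n x).1, (j + 1) = x.1.sum :=
        enc_fst_sum hs1.nodup (fun y hy => (hp1 y hy).1)
      rw [kappa, if_pos (by rw [hs]; omega)]
      rw [Finset.mem_filter, Finset.mem_finsuppAntidiag]
      refine ⟨⟨?_, fun a ha => ?_⟩, ?_⟩
      · have : ∀ j ∈ range n, (enc n x).2 j = (j + 1) * x.2.2.count (j + 1) :=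
          fun j hj => by simp only [enc, Finsupp.onFinset_apply, if_pos hj]
        rw [Finset.sum_congr rfl this, list_count_sum n _ hp2, hs]
        omega
      · by_contra hj
        have hmem := Finsupp.mem_support_iff.mp ha
        simp only [enc, Finsupp.onFinset_apply, if_neg hj] at hmem
        exact hmem rfl
      · intro j hj
        simp only [enc, Finsupp.onFinset_apply, if_pos hj]
        exact dvd_mul_right _ _
  -- hj : dec maps into the fiber
  · rintro ⟨t, d⟩ hp
    rw [Finset.mem_sigma] at hp
    obtain ⟨ht, hd⟩ := hp
    rw [Finset.mem_powerset] at ht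
    obtain ⟨hSt, hsum, hsupp, hdvd⟩ := mem_kappa hd
    dsimp only at hSt hsum hsupp hdvd
    have hmem : ∀ v ∈ ∑ j ∈ range n, Multiset.replicate (d j / (j + 1)) (j + 1),
        ∃ j, j ∈ range n ∧ v = j + 1 := by
      intro v hv
      rw [Multiset.mem_sum] at hv
      obtain ⟨j, hj, hv⟩ := hv
      exact ⟨j, hj, Multiset.eq_of_mem_replicate hv⟩
    have hsumM : (∑ j ∈ range n, Multiset.replicate (d j / (j + 1)) (j + 1)).sum
        = N - (n + 1) - ∑ j ∈ t, (j + 1) := by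
      rw [msum_finsum, ← hsum]
      refine Finset.sum_congr rfl fun j hj => ?_
      rw [Multiset.sum_replicate, smul_eq_mul]
      exact Nat.div_mul_cancel (hdvd j hj)
    rw [Finset.mem_filter, mem_UF]
    refine ⟨⟨?_, ?_, ?_, ?_, ?_, ?_⟩, rfl⟩
    · show (((t.sort (· ≤ ·)).map (· + 1))).Pairwise (· < ·)
      rw [List.pairwise_map]
      exact (List.sortedLT_iff_pairwise.mp (Finset.sortedLT_sort t)).imp (fun h => by omega)
    · exact Multiset.pairwise_sort _ _
    · intro y hy
      obtain ⟨j, hj, rfl⟩ := List.mem_map.mp hy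
      have := Finset.mem_range.mp (ht (Finset.mem_sort (· ≤ ·) |>.mp hj))
      show 0 < j + 1 ∧ j + 1 < n + 1
      omega
    · intro y hy
      obtain ⟨j, hj, rfl⟩ := hmem y (Multiset.mem_sort _ |>.mp hy)
      have := Finset.mem_range.mp hj
      show 0 < j + 1 ∧ j + 1 < n + 1
      omega
    · exact Nat.succ_pos n
    · show (((t.sort (· ≤ ·)).map (· + 1))).sum + (n + 1)
        + ((Multiset.sort
          (∑ j ∈ range n, Multiset.replicate (d j / (j + 1)) (j + 1)) (· ≥ ·) : List ℕ)).sum = N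
      rw [sort_map_sum]
      have h2 : ((Multiset.sort
          (∑ j ∈ range n, Multiset.replicate (d j / (j + 1)) (j + 1)) (· ≥ ·) : List ℕ)).sum
          = N - (n + 1) - ∑ j ∈ t, (j + 1) := by
        rw [← Multiset.sum_coe, Multiset.sort_eq, hsumM]
      rw [h2]
      omega
  -- left inverse
  · intro x hx
    obtain ⟨hs1, hs2, hp1, hp2, hsum⟩ := hfact x hx
    have hpk : x.2.1 = n + 1 := (Finset.mem_filter.mp hx).2
    obtain ⟨l1, c, l2⟩ := x
    simp only at hs1 hs2 hp1 hp2 hsum hpk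
    have hnd : (l1.map (· - 1)).Nodup := nodup_pred hs1.nodup (fun y hy => (hp1 y hy).1)
    have hsrt : (l1.map (· - 1)).Pairwise (· ≤ ·) := by
      rw [List.pairwise_map]
      exact hs1.imp (fun h => by omega)
    refine Prod.ext ?_ (Prod.ext ?_ ?_)
    · show (((l1.map (· - 1)).toFinset.sort (· ≤ ·)).map (· + 1)) = l1
      rw [(List.toFinset_sort (· ≤ ·) hnd).mpr hsrt, List.map_map]
      rw [List.map_congr_left (g := id) (fun a ha => by
        have := (hp1 a ha).1; simp; omega), List.map_id]
    · exact hpk.symm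
    · show Multiset.sort (∑ j ∈ range n,
        Multiset.replicate ((if j ∈ range n then (j + 1) * l2.count (j + 1) else 0) / (j + 1))
          (j + 1)) (· ≥ ·) = l2
      have h1 : (∑ j ∈ range n, Multiset.replicate
          ((if j ∈ range n then (j + 1) * l2.count (j + 1) else 0) / (j + 1)) (j + 1))
          = (l2 : Multiset ℕ) := by
        rw [← list_repl_sum n l2 hp2]
        refine Finset.sum_congr rfl fun j hj => ?_
        rw [if_pos hj, Nat.mul_div_cancel_left _ j.succ_pos]
      rw [h1]
      exact List.Perm.eq_of_pairwise' (Multiset.pairwise_sort _ _) hs2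
        (Multiset.coe_eq_coe.mp (Multiset.sort_eq _ _))
  -- right inverse
  · rintro ⟨t, d⟩ hp
    rw [Finset.mem_sigma] at hp
    obtain ⟨ht, hd⟩ := hp
    rw [Finset.mem_powerset] at ht
    obtain ⟨hSt, hsum, hsupp, hdvd⟩ := mem_kappa hd
    dsimp only at hSt hsum hsupp hdvd
    have h1 : (((t.sort (· ≤ ·)).map (· + 1)).map (· - 1)) = t.sort (· ≤ ·) := by
      rw [List.map_map]
      rw [List.map_congr_left (g := id) (fun a _ => by simp), List.map_id]
    have hfst : (enc n (dec n ⟨t, d⟩)).1 = t := by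
      show ((((t.sort (· ≤ ·)).map (· + 1)).map (· - 1))).toFinset = t
      rw [h1, Finset.sort_toFinset]
    have hsnd : (enc n (dec n ⟨t, d⟩)).2 = d := by
      apply Finsupp.ext
      intro j
      show (if j ∈ range n then (j + 1) * (Multiset.sort
        (∑ i ∈ range n, Multiset.replicate (d i / (i + 1)) (i + 1)) (· ≥ ·)).count (j + 1) else 0) = d j
      by_cases hj : j ∈ range n
      · rw [if_pos hj]
        have hc : (Multiset.sort
            (∑ i ∈ range n, Multiset.replicate (d i / (i + 1)) (i + 1)) (· ≥ ·)).count (j + 1)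
            = d j / (j + 1) := by
          rw [← Multiset.coe_count, Multiset.sort_eq, Multiset.count_sum']
          rw [Finset.sum_congr rfl (fun i _ => Multiset.count_replicate _ _ _)]
          rw [Finset.sum_congr rfl (fun i _ =>
            if_congr (show (i + 1 = j + 1) ↔ (i = j) by omega) rfl rfl)]
          rw [Finset.sum_ite_eq' (range n) j (fun i => d i / (i + 1)), if_pos hj]
        rw [hc]
        exact Nat.mul_div_cancel' (hdvd j hj)
      · rw [if_neg hj]
        by_contra hne
        exact hj (hsupp j (fun h0 => hne h0.symm))
    exact Sigma.ext hfst (heq_of_eq hsnd)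
  -- values
  · intro x hx
    obtain ⟨hs1, hs2, hp1, hp2, hsum⟩ := hfact x hx
    have e1 : ∑ j ∈ range n, ((enc n x).2 j / (j + 1)) = x.2.2.length := by
      calc ∑ j ∈ range n, ((enc n x).2 j / (j + 1))
          = ∑ j ∈ range n, x.2.2.count (j + 1) := Finset.sum_congr rfl fun j hj => by
            simp only [enc, Finsupp.onFinset_apply, if_pos hj]
            exact congrArg (· / (j+1)) rfl |>.trans (Nat.mul_div_cancel_left _ j.succ_pos)
        _ = x.2.2.length := list_count_len n _ hp2
    have e2 : (enc n x).1.card = x.1.length :=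
      enc_fst_card hs1.nodup (fun y hy => (hp1 y hy).1)
    rw [unimodalRank]
    congr 1
    rw [← Nat.cast_sum, e1, e2]

end SSU

open LaurentPolynomial PowerSeries in
/-- `∑_{m,n} dm(m,n) ζ^m q^n = ∑_{n≥0} ((-ζ⁻¹q;q)_n / (ζq;q)_n) q^{n+1}`, stated
coefficientwise in `q`, with coefficients in the ring of Laurent polynomials in `ζ`;
terms with `n ≥ N` contribute nothing to the coefficient of `q^N`. -/
theorem semistrict_rank_generating_function (N : ℕ) :
    (∑ᶠ m : ℤ, (dmCount m N : ℚ) • (T m : LaurentPolynomial ℚ)) =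
      PowerSeries.coeff (R := LaurentPolynomial ℚ) N
        (∑ n ∈ Finset.range (N + 1),
          (∏ j ∈ Finset.range n,
              (1 + PowerSeries.C (R := LaurentPolynomial ℚ) (T (-1)) * PowerSeries.X ^ (j + 1))) *
            PowerSeries.invOfUnit
              (∏ j ∈ Finset.range n,
                  (1 - PowerSeries.C (R := LaurentPolynomial ℚ) (T 1) * PowerSeries.X ^ (j + 1)))
              1 *
            PowerSeries.X ^ (n + 1)) := by
  rw [SSU.lhs_eq, SSU.lhs_fiber, map_sum]
  refine Finset.sum_congr rfl fun n hn => ?_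
  rw [SSU.invOfUnit_prod, PowerSeries.coeff_mul_X_pow']
  by_cases h : n + 1 ≤ N
  · rw [if_pos h, SSU.coeff_AG]
    exact SSU.fiber_eq N n h
  · rw [if_neg h]
    rw [Finset.filter_false_of_mem (fun x hx hpk => ?_), Finset.sum_empty]
    obtain ⟨-, -, -, -, hc, hsum⟩ := SSU.mem_UF.mp hx
    omega
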